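/- Let R be a nonzero commutative local ring and ϖ ∈ R a regular element that is not a unit and generates a prime ideal ϖR. Let M be a free R-module with basis {x, y}, and let J be an R-linear endomorphism of M satisfying J² = ϖ·id_M, J(x) ∈ R·y, and J(y) ∈ R·x. Then exactly one of the following two alternatives holds: (i) there is a basis {x₀, y₀} of M with R·x₀ = R·x and R·y₀ = R·y such that J(x₀) = ϖ·y₀ and J(y₀) = x₀; (ii) there is a basis {x₀, y₀} of M with R·x₀ = R·x and R·y₀ = R·y such that J(x₀) = y₀ and J(y₀) = ϖ·x₀. -/

import Mathlib

section Aux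

variable {R M : Type*} [CommRing R] [AddCommGroup M] [Module R M]

lemma aux_smul_basis_inj (b : Module.Basis (Fin 2) R M) (i : Fin 2) {r s : R}
    (h : r • b i = s • b i) : r = s := by
  have := congrArg (fun m => b.repr m i) h
  simpa using this

lemma aux_span_eq_unit (b : Module.Basis (Fin 2) R M) (i : Fin 2) {v : M}
    (h : Submodule.span R ({v} : Set M) = Submodule.span R ({b i} : Set M)) :
    ∃ r : R, IsUnit r ∧ v = r • b i := by
  obtain ⟨r, hr⟩ := Submodule.mem_span_singleton.mp
    (h ▸ Submodule.mem_span_singleton_self v)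
  obtain ⟨s, hs⟩ := Submodule.mem_span_singleton.mp
    (h ▸ Submodule.mem_span_singleton_self (b i))
  have h1 : (s * r) • b i = (1 : R) • b i := by
    rw [one_smul, mul_smul, hr, hs]
  have := aux_smul_basis_inj b i h1
  exact ⟨r, IsUnit.of_mul_eq_one (a := r) s (by rw [mul_comm]; exact this), hr.symm⟩

end Aux

/-- Let `R` be a nonzero commutative local ring and `ϖ ∈ R` a regular
non-unit generating a prime ideal.  Let `M` be free with basis `{x, y}` and `J` an
endomorphism with `J² = ϖ·id`, `J(x) ∈ R·y`, `J(y) ∈ R·x`.  Then exactly one of the two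
alternatives holds: a basis `{x₀, y₀}` with `R·x₀ = R·x`, `R·y₀ = R·y` such that
`J(x₀) = ϖ·y₀, J(y₀) = x₀`, or one such that `J(x₀) = y₀, J(y₀) = ϖ·x₀`. -/
theorem quaternionic_module_classification (R : Type*) [CommRing R] [IsLocalRing R]
    (ϖ : R) (hreg : ϖ ∈ nonZeroDivisors R) (hunit : ¬IsUnit ϖ)
    (hprime : (Ideal.span ({ϖ} : Set R)).IsPrime)
    (M : Type*) [AddCommGroup M] [Module R M] (b : Module.Basis (Fin 2) R M)
    (J : M →ₗ[R] M) (hJ2 : ∀ m, J (J m) = ϖ • m)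
    (hJx : J (b 0) ∈ Submodule.span R ({b 1} : Set M))
    (hJy : J (b 1) ∈ Submodule.span R ({b 0} : Set M)) :
    Xor'
      (∃ b₀ : Module.Basis (Fin 2) R M,
        Submodule.span R ({b₀ 0} : Set M) = Submodule.span R ({b 0} : Set M) ∧
        Submodule.span R ({b₀ 1} : Set M) = Submodule.span R ({b 1} : Set M) ∧
        J (b₀ 0) = ϖ • b₀ 1 ∧ J (b₀ 1) = b₀ 0)
      (∃ b₀ : Module.Basis (Fin 2) R M,
        Submodule.span R ({b₀ 0} : Set M) = Submodule.span R ({b 0} : Set M) ∧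
        Submodule.span R ({b₀ 1} : Set M) = Submodule.span R ({b 1} : Set M) ∧
        J (b₀ 0) = b₀ 1 ∧ J (b₀ 1) = ϖ • b₀ 0) := by
  obtain ⟨a, ha⟩ := Submodule.mem_span_singleton.mp hJx
  obtain ⟨c, hc⟩ := Submodule.mem_span_singleton.mp hJy
  -- a * c = ϖ
  have hac : a * c = ϖ := by
    have h1 : (a * c) • b 0 = ϖ • b 0 := by
      have h := hJ2 (b 0)
      rw [← ha, map_smul, ← hc, smul_smul] at h
      exact h
    exact aux_smul_basis_inj b 0 h1
  -- Exclusion: both alternatives cannot hold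
  have hexcl : ¬((∃ b₀ : Module.Basis (Fin 2) R M,
        Submodule.span R ({b₀ 0} : Set M) = Submodule.span R ({b 0} : Set M) ∧
        Submodule.span R ({b₀ 1} : Set M) = Submodule.span R ({b 1} : Set M) ∧
        J (b₀ 0) = ϖ • b₀ 1 ∧ J (b₀ 1) = b₀ 0) ∧
      (∃ b₀ : Module.Basis (Fin 2) R M,
        Submodule.span R ({b₀ 0} : Set M) = Submodule.span R ({b 0} : Set M) ∧
        Submodule.span R ({b₀ 1} : Set M) = Submodule.span R ({b 1} : Set M) ∧
        J (b₀ 0) = b₀ 1 ∧ J (b₀ 1) = ϖ • b₀ 0)) := by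
    rintro ⟨⟨b₁, hx1, hy1, hJ1, -⟩, ⟨b₂, hx2, hy2, hJ2', -⟩⟩
    obtain ⟨u, hu, hux⟩ := aux_span_eq_unit b 0 hx1
    obtain ⟨v, hv, hvy⟩ := aux_span_eq_unit b 1 hy1
    obtain ⟨u', hu', hux'⟩ := aux_span_eq_unit b 0 hx2
    obtain ⟨v', hv', hvy'⟩ := aux_span_eq_unit b 1 hy2
    -- from alternative (i): u * a = ϖ * v
    have e1 : u * a = ϖ * v := by
      have : (u * a) • b 1 = (ϖ * v) • b 1 := by
        have := hJ1
        rw [hux, hvy, map_smul, ← ha, smul_smul, smul_smul] at this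
        exact this
      exact aux_smul_basis_inj b 1 this
    -- from alternative (ii): u' * a = v'
    have e2 : u' * a = v' := by
      have : (u' * a) • b 1 = v' • b 1 := by
        have := hJ2'
        rw [hux', hvy', map_smul, ← ha, smul_smul] at this
        exact this
      exact aux_smul_basis_inj b 1 this
    have haunit : IsUnit a := by
      have : IsUnit (u' * a) := e2 ▸ hv'
      exact (isUnit_of_mul_isUnit_right this)
    have : IsUnit (ϖ * v) := e1 ▸ hu.mul haunit
    exact hunit (isUnit_of_mul_isUnit_left this)
  -- main dichotomy
  have hmem : a * c ∈ Ideal.span ({ϖ} : Set R) := by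
    rw [hac]; exact Ideal.subset_span rfl
  rcases hprime.mem_or_mem hmem with hA | hC
  · -- a = d * ϖ, so c is a unit: alternative (i)
    obtain ⟨d, hd⟩ := Ideal.mem_span_singleton'.mp hA
    have hcu : IsUnit c := by
      have h1 : (d * c) * ϖ = 1 * ϖ := by
        rw [one_mul]
        calc (d * c) * ϖ = (d * ϖ) * c := by ring
          _ = a * c := by rw [hd]
          _ = ϖ := hac
      have : d * c = 1 := mul_cancel_right_mem_nonZeroDivisors hreg |>.mp h1
      exact IsUnit.of_mul_eq_one (a := c) d (by rw [mul_comm]; exact this)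
    set w : Fin 2 → Rˣ := ![hcu.unit, 1] with hw
    have key : (∃ b₀ : Module.Basis (Fin 2) R M,
        Submodule.span R ({b₀ 0} : Set M) = Submodule.span R ({b 0} : Set M) ∧
        Submodule.span R ({b₀ 1} : Set M) = Submodule.span R ({b 1} : Set M) ∧
        J (b₀ 0) = ϖ • b₀ 1 ∧ J (b₀ 1) = b₀ 0) := by
      refine ⟨b.unitsSMul w, ?_, ?_, ?_, ?_⟩
      · rw [Module.Basis.unitsSMul_apply]
        exact Submodule.span_singleton_smul_eq (w 0).isUnit _
      · rw [Module.Basis.unitsSMul_apply]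
        exact Submodule.span_singleton_smul_eq (w 1).isUnit _
      · rw [Module.Basis.unitsSMul_apply, Module.Basis.unitsSMul_apply]
        show J ((hcu.unit : R) • b 0) = ϖ • ((1 : Rˣ) : R) • b 1
        simp only [Units.val_one, one_smul, hcu.unit_spec, map_smul, ← ha, smul_smul]
        rw [mul_comm c a, hac]
      · rw [Module.Basis.unitsSMul_apply, Module.Basis.unitsSMul_apply]
        show J (((1 : Rˣ) : R) • b 1) = (hcu.unit : R) • b 0
        simp only [Units.val_one, one_smul, hcu.unit_spec, ← hc]
    exact Or.inl ⟨key, fun q => hexcl ⟨key, q⟩⟩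
  · -- c = d * ϖ, so a is a unit: alternative (ii)
    obtain ⟨d, hd⟩ := Ideal.mem_span_singleton'.mp hC
    have hau : IsUnit a := by
      have h1 : (a * d) * ϖ = 1 * ϖ := by
        rw [one_mul]
        calc (a * d) * ϖ = a * (d * ϖ) := by ring
          _ = a * c := by rw [hd]
          _ = ϖ := hac
      have : a * d = 1 := mul_cancel_right_mem_nonZeroDivisors hreg |>.mp h1
      exact IsUnit.of_mul_eq_one (a := a) d this
    set w : Fin 2 → Rˣ := ![1, hau.unit] with hw
    have key : (∃ b₀ : Module.Basis (Fin 2) R M,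
        Submodule.span R ({b₀ 0} : Set M) = Submodule.span R ({b 0} : Set M) ∧
        Submodule.span R ({b₀ 1} : Set M) = Submodule.span R ({b 1} : Set M) ∧
        J (b₀ 0) = b₀ 1 ∧ J (b₀ 1) = ϖ • b₀ 0) := by
      refine ⟨b.unitsSMul w, ?_, ?_, ?_, ?_⟩
      · rw [Module.Basis.unitsSMul_apply]
        exact Submodule.span_singleton_smul_eq (w 0).isUnit _
      · rw [Module.Basis.unitsSMul_apply]
        exact Submodule.span_singleton_smul_eq (w 1).isUnit _
      · rw [Module.Basis.unitsSMul_apply, Module.Basis.unitsSMul_apply]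
        show J (((1 : Rˣ) : R) • b 0) = (hau.unit : R) • b 1
        simp only [Units.val_one, one_smul, hau.unit_spec, ← ha]
      · rw [Module.Basis.unitsSMul_apply, Module.Basis.unitsSMul_apply]
        show J ((hau.unit : R) • b 1) = ϖ • ((1 : Rˣ) : R) • b 0
        simp only [Units.val_one, one_smul, hau.unit_spec, map_smul, ← hc, smul_smul, hac]
    exact Or.inr ⟨key, fun p => hexcl ⟨p, key⟩⟩
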